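/- For every integer u ≥ 2 and every integer n ≥ 2u, |D_{u,n}| = Σ_{i=1}^{u} (−1)^{i−1} C(u,i) |D_{u,n−i}| + |D_{u,n−2u+1}|. -/

import Mathlib

/-- The set of the first `n` positive integers not divisible by `u`. -/
def Gset (u n : ℕ) : Finset ℕ := (Finset.Icc 1 n).image fun k => (u * k - 1) / (u - 1)

/-- The Schreier subsets of `Gset u n` containing its largest element `⌊(un-1)/(u-1)⌋`. -/
def Dset (u n : ℕ) : Finset (Finset ℕ) :=
  (Gset u n).powerset.filter fun F => (u * n - 1) / (u - 1) ∈ F ∧ ∀ x ∈ F, F.card ≤ x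

namespace SchreierAux

/-- abbreviation for the k-th positive non-multiple of u -/
def g (u k : ℕ) : ℕ := (u * k - 1) / (u - 1)

lemma g_eq (u k : ℕ) (hu : 2 ≤ u) (hk : 1 ≤ k) : g u k = k + (k - 1) / (u - 1) := by
  have h1 : (u - 1) * k = u * k - k := by rw [Nat.sub_mul, one_mul]
  have h2 : k ≤ u * k := Nat.le_mul_of_pos_left k (by omega)
  have h3 : u * k - 1 = (u - 1) * k + (k - 1) := by omega
  rw [g, h3, Nat.mul_add_div (by omega : 0 < u - 1)]

lemma g_lt (u k l : ℕ) (hu : 2 ≤ u) (hk : 1 ≤ k) (hkl : k < l) : g u k < g u l := by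
  rw [g_eq u k hu hk, g_eq u l hu (by omega)]
  have : (k - 1) / (u - 1) ≤ (l - 1) / (u - 1) := Nat.div_le_div_right (by omega)
  omega

lemma g_ge (u k : ℕ) (hu : 2 ≤ u) (hk : 1 ≤ k) : k ≤ g u k := by
  rw [g_eq u k hu hk]; exact Nat.le_add_right _ _

lemma g_not_dvd (u k : ℕ) (hu : 2 ≤ u) (hk : 1 ≤ k) : ¬ u ∣ g u k := by
  rintro ⟨s, hs⟩
  rw [g_eq u k hu hk] at hs
  set t := (k - 1) / (u - 1) with ht
  have e1 : (u - 1) * t + (k - 1) % (u - 1) = k - 1 := Nat.div_add_mod _ _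
  have e2 : (k - 1) % (u - 1) < u - 1 := Nat.mod_lt _ (by omega)
  have h1 : u * t < u * s := by
    have : u * t = (u - 1) * t + t := by rw [Nat.sub_mul, one_mul]; have := Nat.le_mul_of_pos_left t (by omega : 0 < u); omega
    omega
  have h2 : t < s := Nat.lt_of_mul_lt_mul_left h1
  have h3 : u * (t + 1) ≤ u * s := Nat.mul_le_mul_left u h2
  have h4 : u * (t + 1) = u * t + u := by ring
  have h5 : u * t = (u - 1) * t + t := by rw [Nat.sub_mul, one_mul]; have := Nat.le_mul_of_pos_left t (by omega : 0 < u); omega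
  omega

lemma nonmult_card (u N : ℕ) :
    ((Finset.Icc 1 N).filter (fun x => ¬ u ∣ x)).card = N - N / u := by
  have h0 : Finset.Icc 1 N = Finset.Ioc 0 N := by ext x; simp; omega
  have h1 : ((Finset.Icc 1 N).filter (fun x => u ∣ x)).card
      + ((Finset.Icc 1 N).filter (fun x => ¬ u ∣ x)).card = (Finset.Icc 1 N).card :=
    Finset.card_filter_add_card_filter_not (fun x => u ∣ x)
  have h2 : ((Finset.Icc 1 N).filter (fun x => u ∣ x)).card = N / u := by
    rw [h0]; exact Nat.Ioc_filter_dvd_card_eq_div N u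
  have h3 : (Finset.Icc 1 N).card = N := by simp
  omega

lemma Gset_image (u m : ℕ) : Gset u m = (Finset.Icc 1 m).image (g u) := rfl

lemma g_zero (u : ℕ) : g u 0 = 0 := by simp [g]

lemma Gset_eq (u m : ℕ) (hu : 2 ≤ u) :
    Gset u m = (Finset.Icc 1 (g u m)).filter (fun x => ¬ u ∣ x) := by
  rcases Nat.eq_zero_or_pos m with rfl | hm
  · rw [Gset_image, g_zero]; simp
  have hsub : Gset u m ⊆ (Finset.Icc 1 (g u m)).filter (fun x => ¬ u ∣ x) := by
    intro x hx
    rw [Gset_image] at hx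
    simp only [Finset.mem_image, Finset.mem_Icc] at hx
    obtain ⟨k, ⟨hk1, hk2⟩, rfl⟩ := hx
    simp only [Finset.mem_filter, Finset.mem_Icc]
    refine ⟨⟨?_, ?_⟩, g_not_dvd u k hu hk1⟩
    · have := g_ge u k hu hk1; omega
    · rcases eq_or_lt_of_le hk2 with rfl | h
      · exact le_rfl
      · exact le_of_lt (g_lt u k m hu hk1 h)
  have hcard1 : (Gset u m).card = m := by
    rw [Gset_image, Finset.card_image_of_injOn, Nat.card_Icc]
    · omega
    · intro a ha b hb hab
      simp only [Finset.coe_Icc, Set.mem_Icc] at ha hb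
      by_contra hne
      rcases Nat.lt_or_ge a b with h | h
      · exact absurd hab (Nat.ne_of_lt (g_lt u a b hu ha.1 h))
      · have : b < a := by omega
        exact absurd hab.symm (Nat.ne_of_lt (g_lt u b a hu hb.1 this))
  have hcard2 : ((Finset.Icc 1 (g u m)).filter (fun x => ¬ u ∣ x)).card = m := by
    rw [nonmult_card]
    rw [g_eq u m hu hm]
    set t := (m - 1) / (u - 1) with ht
    have e1 : (u - 1) * t + (m - 1) % (u - 1) = m - 1 := Nat.div_add_mod _ _
    have e2 : (m - 1) % (u - 1) < u - 1 := Nat.mod_lt _ (by omega)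
    have h5 : u * t = (u - 1) * t + t := by rw [Nat.sub_mul, one_mul]; have := Nat.le_mul_of_pos_left t (by omega : 0 < u); omega
    have hrw : m + t = u * t + ((m - 1) % (u - 1) + 1) := by omega
    rw [hrw, Nat.mul_add_div (by omega : 0 < u), Nat.div_eq_of_lt (by omega)]
    omega
  exact Finset.eq_of_subset_of_card_le hsub (by omega)

lemma card_Gset (u m : ℕ) (hu : 2 ≤ u) : (Gset u m).card = m := by
  rw [Gset_eq u m hu, nonmult_card]
  rcases Nat.eq_zero_or_pos m with rfl | hm
  · rw [g_zero]; simp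
  rw [g_eq u m hu hm]
  set t := (m - 1) / (u - 1) with ht
  have e1 : (u - 1) * t + (m - 1) % (u - 1) = m - 1 := Nat.div_add_mod _ _
  have e2 : (m - 1) % (u - 1) < u - 1 := Nat.mod_lt _ (by omega)
  have h5 : u * t = (u - 1) * t + t := by rw [Nat.sub_mul, one_mul]; have := Nat.le_mul_of_pos_left t (by omega : 0 < u); omega
  have hrw : m + t = u * t + ((m - 1) % (u - 1) + 1) := by omega
  rw [hrw, Nat.mul_add_div (by omega : 0 < u), Nat.div_eq_of_lt (by omega)]
  omega

end SchreierAux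

namespace SchreierAux

lemma Gset_insert (u m : ℕ) (hu : 2 ≤ u) (hm : 1 ≤ m) :
    Gset u m = insert (g u m) (Gset u (m - 1)) := by
  rw [Gset_image, Gset_image]
  have h : Finset.Icc 1 m = insert m (Finset.Icc 1 (m - 1)) := by
    ext x; simp [Finset.mem_Icc]; omega
  rw [h, Finset.image_insert]

lemma g_mem (u m : ℕ) (hm : 1 ≤ m) : g u m ∈ Gset u m := by
  rw [Gset_image]
  exact Finset.mem_image_of_mem _ (by simp [Finset.mem_Icc]; omega)

lemma g_not_mem (u m : ℕ) (hu : 2 ≤ u) (hm : 1 ≤ m) : g u m ∉ Gset u (m - 1) := by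
  rw [Gset_image]
  intro h
  simp only [Finset.mem_image, Finset.mem_Icc] at h
  obtain ⟨k, ⟨hk1, hk2⟩, hk3⟩ := h
  exact absurd hk3 (Nat.ne_of_lt (g_lt u k m hu hk1 (by omega)))

/-- cardinality of the elements of `Gset u (m-1)` that are `≥ c` -/
lemma T_card (u m c : ℕ) (hu : 2 ≤ u) (hc : 1 ≤ c) (hcm : c ≤ m) :
    ((Gset u (m - 1)).filter (fun x => c ≤ x)).card = m - c + (c - 1) / u := by
  rw [Gset_eq u (m - 1) hu]
  have hgm : m - 1 ≤ g u (m - 1) := by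
    rcases Nat.eq_zero_or_pos (m - 1) with h | h
    · omega
    · exact g_ge u (m - 1) hu h
  have hsplit : ((Finset.Icc 1 (g u (m - 1))).filter (fun x => ¬ u ∣ x)).filter (fun x => c ≤ x)
      = ((Finset.Icc 1 (g u (m-1))).filter (fun x => ¬ u ∣ x)) \
        ((Finset.Icc 1 (c-1)).filter (fun x => ¬ u ∣ x)) := by
    ext x
    simp only [Finset.mem_filter, Finset.mem_sdiff, Finset.mem_Icc]
    constructor
    · rintro ⟨⟨⟨h1, h2⟩, h3⟩, h4⟩
      exact ⟨⟨⟨h1, h2⟩, h3⟩, by rintro ⟨⟨_, _⟩, _⟩; omega⟩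
    · rintro ⟨⟨⟨h1, h2⟩, h3⟩, h4⟩
      refine ⟨⟨⟨h1, h2⟩, h3⟩, ?_⟩
      by_contra hcx
      exact h4 ⟨⟨h1, by omega⟩, h3⟩
  have hsub : ((Finset.Icc 1 (c-1)).filter (fun x => ¬ u ∣ x)) ⊆
      ((Finset.Icc 1 (g u (m-1))).filter (fun x => ¬ u ∣ x)) := by
    intro x hx
    simp only [Finset.mem_filter, Finset.mem_Icc] at hx ⊢
    exact ⟨⟨hx.1.1, by omega⟩, hx.2⟩
  rw [hsplit, Finset.card_sdiff_of_subset hsub, nonmult_card, nonmult_card]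
  -- now arithmetic : (g(m-1) - g(m-1)/u) - ((c-1) - (c-1)/u) = m - c + (c-1)/u
  have hG : (g u (m-1)) - (g u (m-1))/u = m - 1 := by
    have := card_Gset u (m - 1) hu
    rw [Gset_eq u (m-1) hu, nonmult_card] at this
    exact this
  have h1 : (c - 1) / u ≤ c - 1 := Nat.div_le_self _ _
  have h2 : c - 1 ≤ g u (m - 1) := by omega
  have h3 : (c-1) - (c-1)/u ≤ (m-1) := by
    have : (c-1) - (c-1)/u ≤ (g u (m-1)) - (g u (m-1))/u := by
      rw [← nonmult_card u (c-1), ← nonmult_card u (g u (m-1))]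
      exact Finset.card_le_card hsub
    omega
  have h4 : (g u (m-1))/u ≤ g u (m-1) := Nat.div_le_self _ _
  omega

end SchreierAux

namespace SchreierAux

lemma Dset_mem (u m : ℕ) (F : Finset ℕ) :
    F ∈ Dset u m ↔ F ⊆ Gset u m ∧ g u m ∈ F ∧ ∀ x ∈ F, F.card ≤ x := by
  simp [Dset, Finset.mem_filter, Finset.mem_powerset, g]

lemma card_Dset_fiber (u m c : ℕ) (hu : 2 ≤ u) (hm : 1 ≤ m) (hc : 1 ≤ c) (hcm : c ≤ m) :
    ((Dset u m).filter (fun F => F.card = c)).card = (m - c + (c - 1) / u).choose (c - 1) := by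
  rw [← T_card u m c hu hc hcm, ← Finset.card_powersetCard]
  refine Finset.card_bij' (fun F _ => F.erase (g u m))
    (fun F' _ => insert (g u m) F') ?hi ?hj ?left ?right
  case hi =>
    intro F hF
    simp only [Finset.mem_filter, Dset_mem] at hF
    obtain ⟨⟨hsub, hmem, hschreier⟩, hcard⟩ := hF
    rw [Finset.mem_powersetCard]
    constructor
    · intro x hx
      rw [Finset.mem_erase] at hx
      obtain ⟨hne, hxF⟩ := hx
      rw [Finset.mem_filter]
      have hxG : x ∈ Gset u m := hsub hxF
      rw [Gset_insert u m hu hm, Finset.mem_insert] at hxG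
      refine ⟨hxG.resolve_left hne, ?_⟩
      have := hschreier x hxF
      omega
    · rw [Finset.card_erase_of_mem hmem, hcard]
  case hj =>
    intro F' hF'
    rw [Finset.mem_powersetCard] at hF'
    obtain ⟨hsub, hcard⟩ := hF'
    have hGnot : g u m ∉ F' := fun h => g_not_mem u m hu hm (Finset.mem_filter.mp (hsub h)).1
    have hcardins : (insert (g u m) F').card = c := by
      rw [Finset.card_insert_of_notMem hGnot, hcard]; omega
    simp only [Finset.mem_filter, Dset_mem]
    refine ⟨⟨?_, Finset.mem_insert_self _ _, ?_⟩, hcardins⟩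
    · intro x hx
      rw [Finset.mem_insert] at hx
      rcases hx with rfl | hx
      · exact g_mem u m hm
      · rw [Gset_insert u m hu hm]
        exact Finset.mem_insert_of_mem (Finset.mem_filter.mp (hsub hx)).1
    · intro x hx
      rw [hcardins]
      rw [Finset.mem_insert] at hx
      rcases hx with rfl | hx
      · have h1 : m ≤ g u m := g_ge u m hu hm
        omega
      · exact (Finset.mem_filter.mp (hsub hx)).2
  case left =>
    intro F hF
    simp only [Finset.mem_filter, Dset_mem] at hF
    exact Finset.insert_erase hF.1.2.1
  case right =>
    intro F' hF'
    rw [Finset.mem_powersetCard] at hF'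
    have hGnot : g u m ∉ F' := fun h => g_not_mem u m hu hm (Finset.mem_filter.mp (hF'.1 h)).1
    exact Finset.erase_insert hGnot

lemma card_Dset (u m : ℕ) (hu : 2 ≤ u) (hm : 1 ≤ m) :
    (Dset u m).card = ∑ c ∈ Finset.Icc 1 m, (m - c + (c - 1) / u).choose (c - 1) := by
  have h := Finset.card_eq_sum_card_fiberwise
    (f := Finset.card) (s := Dset u m) (t := Finset.Icc 1 m) ?_
  · rw [h]
    apply Finset.sum_congr rfl
    intro c hc
    rw [Finset.mem_Icc] at hc
    exact card_Dset_fiber u m c hu hm hc.1 hc.2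
  · intro F hF
    rw [Finset.mem_coe, Dset_mem] at hF
    rw [Finset.mem_coe, Finset.mem_Icc]
    constructor
    · exact Finset.card_pos.mpr ⟨_, hF.2.1⟩
    · calc F.card ≤ (Gset u m).card := Finset.card_le_card hF.1
        _ = m := card_Gset u m hu

end SchreierAux

namespace SchreierAux

lemma alt_vandermonde (r u : ℕ) : ∀ M : ℕ, u ≤ M →
    ∑ i ∈ Finset.range (u+1), (-1:ℤ)^i * (u.choose i : ℤ) * ((M - i).choose r : ℤ)
      = if u ≤ r then (((M-u).choose (r-u) : ℕ) : ℤ) else 0 := by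
  induction u with
  | zero => intro M _; simp
  | succ u ih =>
    intro M hM
    have hrec : ∑ i ∈ Finset.range (u+1+1), (-1:ℤ)^i * ((u+1).choose i : ℤ) * ((M - i).choose r : ℤ)
        = (∑ i ∈ Finset.range (u+1), (-1:ℤ)^i * (u.choose i : ℤ) * ((M - i).choose r : ℤ))
          - ∑ i ∈ Finset.range (u+1), (-1:ℤ)^i * (u.choose i : ℤ) * (((M-1) - i).choose r : ℤ) := by
      rw [Finset.sum_range_succ' (fun i => (-1:ℤ)^i * ((u+1).choose i : ℤ) * ((M - i).choose r : ℤ)) (u+1)]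
      have step1 : ∀ i ∈ Finset.range (u+1),
          (-1:ℤ)^(i+1) * ((u+1).choose (i+1) : ℤ) * ((M - (i+1)).choose r : ℤ)
          = -((-1:ℤ)^i * (u.choose i : ℤ) * (((M-1) - i).choose r : ℤ))
            + (-1:ℤ)^(i+1) * (u.choose (i+1) : ℤ) * ((M - (i+1)).choose r : ℤ) := by
        intro i hi
        have h1 : M - (i+1) = (M-1) - i := by omega
        rw [Nat.choose_succ_succ, h1]
        push_cast
        ring
      rw [Finset.sum_congr rfl step1, Finset.sum_add_distrib]
      have step2 : ∑ i ∈ Finset.range (u+1), (-1:ℤ)^(i+1) * (u.choose (i+1):ℤ) * ((M-(i+1)).choose r : ℤ)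
          = (∑ i ∈ Finset.range (u+1), (-1:ℤ)^i * (u.choose i:ℤ) * ((M-i).choose r:ℤ)) - (M.choose r : ℤ) := by
        have e1 : ∑ i ∈ Finset.range (u+2), (-1:ℤ)^i * (u.choose i:ℤ) * ((M-i).choose r:ℤ)
            = ∑ i ∈ Finset.range (u+1), (-1:ℤ)^(i+1) * (u.choose (i+1):ℤ) * ((M-(i+1)).choose r : ℤ)
              + (M.choose r : ℤ) := by
          rw [Finset.sum_range_succ' (fun i => (-1:ℤ)^i * (u.choose i:ℤ) * ((M-i).choose r:ℤ)) (u+1)]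
          simp
        have e2 : ∑ i ∈ Finset.range (u+2), (-1:ℤ)^i * (u.choose i:ℤ) * ((M-i).choose r:ℤ)
            = ∑ i ∈ Finset.range (u+1), (-1:ℤ)^i * (u.choose i:ℤ) * ((M-i).choose r:ℤ) := by
          rw [Finset.sum_range_succ]
          simp [Nat.choose_succ_self]
        rw [e2] at e1
        linarith
      rw [Finset.sum_neg_distrib, step2]
      simp
      ring
    rw [hrec, ih M (by omega), ih (M-1) (by omega)]
    rcases Nat.lt_or_ge r u with h | h
    · rw [if_neg (by omega), if_neg (by omega), if_neg (by omega)]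
      ring
    rcases Nat.eq_or_lt_of_le h with rfl | h2
    · rw [if_pos le_rfl, if_pos le_rfl, if_neg (by omega)]
      simp [Nat.sub_self]
    · rw [if_pos (by omega), if_pos (by omega), if_pos (by omega)]
      have e1 : M - u = (M - (u+1)) + 1 := by omega
      have e2 : r - u = (r - (u+1)) + 1 := by omega
      have e3 : M - 1 - u = M - (u+1) := by omega
      rw [e1, e2, e3, Nat.choose_succ_succ]
      push_cast
      ring

end SchreierAux

namespace SchreierAux

/-- Step A: the closed-form sum for `n - i`, extended to range `Icc 1 n`. -/
lemma stepA (u n i : ℕ) (hu : 2 ≤ u) (hn : 2 * u ≤ n) (hi : i ≤ u) :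
    (∑ c ∈ Finset.Icc 1 (n - i), (((n - i) - c + (c-1)/u).choose (c-1) : ℤ))
      = ∑ c ∈ Finset.Icc 1 n, (((n - c + (c-1)/u - i).choose (c-1) : ℤ)) := by
  have hcg : ∀ c ∈ Finset.Icc 1 (n - i), (((n - i) - c + (c-1)/u).choose (c-1) : ℤ)
      = (((n - c + (c-1)/u - i).choose (c-1) : ℤ)) := by
    intro c hc
    rw [Finset.mem_Icc] at hc
    congr 2
    have hkey : ∀ q : ℕ, n - i - c + q = n - c + q - i := fun q => by omega
    exact hkey _
  rw [Finset.sum_congr rfl hcg]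
  apply Finset.sum_subset
  · apply Finset.Icc_subset_Icc_right; omega
  · intro c hc hc2
    rw [Finset.mem_Icc] at hc
    simp only [Finset.mem_Icc, not_and, not_le] at hc2
    have hc3 : n - i < c := hc2 hc.1
    have hq : (c-1)/u ≤ c - 1 := Nat.div_le_self _ _
    rw [Nat.cast_eq_zero]
    apply Nat.choose_eq_zero_of_lt
    set q := (c-1)/u with hqq
    omega

theorem key_identity (u n : ℕ) (hu : 2 ≤ u) (hn : 2 * u ≤ n) :
    ∑ i ∈ Finset.range (u+1), (-1:ℤ)^i * (u.choose i : ℤ) * ((Dset u (n - i)).card : ℤ)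
      = ((Dset u (n - (2 * u - 1))).card : ℤ) := by
  have hd : ∀ m : ℕ, 1 ≤ m → ((Dset u m).card : ℤ)
      = ∑ c ∈ Finset.Icc 1 m, ((m - c + (c-1)/u).choose (c-1) : ℤ) := by
    intro m hm
    rw [card_Dset u m hu hm]
    push_cast
    rfl
  -- rewrite each d(n-i) as an extended sum
  have h1 : ∀ i ∈ Finset.range (u+1), (-1:ℤ)^i * (u.choose i : ℤ) * ((Dset u (n - i)).card : ℤ)
      = ∑ c ∈ Finset.Icc 1 n, (-1:ℤ)^i * (u.choose i : ℤ) * ((n - c + (c-1)/u - i).choose (c-1) : ℤ) := by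
    intro i hi
    rw [Finset.mem_range] at hi
    rw [hd (n - i) (by omega), stepA u n i hu hn (by omega), Finset.mul_sum]
  rw [Finset.sum_congr rfl h1, Finset.sum_comm]
  -- per-c evaluation
  have h2 : ∀ c ∈ Finset.Icc 1 n,
      (∑ i ∈ Finset.range (u+1), (-1:ℤ)^i * (u.choose i : ℤ) * ((n - c + (c-1)/u - i).choose (c-1) : ℤ))
      = if u + 1 ≤ c then ((n - c + (c-1)/u - u).choose (c - 1 - u) : ℤ) else 0 := by
    intro c hc
    rw [Finset.mem_Icc] at hc
    rcases Nat.lt_or_ge (n - c + (c-1)/u) u with hM | hM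
    · -- degenerate case: all terms vanish
      have hdiv : (u + 1 - 1) / u = 1 := by
        simp [Nat.div_self (by omega : 0 < u)]
      have hc2 : u + 2 ≤ c := by
        by_contra hcon
        push_neg at hcon
        rcases Nat.lt_or_ge c (u + 1) with h | h
        · have h5 : n - c + (c-1)/u ≥ n - c := Nat.le_add_right _ _
          omega
        · have hceq : c = u + 1 := by omega
          subst hceq
          omega
      have hz : ∀ i ∈ Finset.range (u+1),
          (-1:ℤ)^i * (u.choose i : ℤ) * ((n - c + (c-1)/u - i).choose (c-1) : ℤ) = 0 := by
        intro i _
        have : (n - c + (c-1)/u - i).choose (c-1) = 0 :=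
          Nat.choose_eq_zero_of_lt (by set q := (c-1)/u with hq; omega)
        rw [this]
        simp
      rw [Finset.sum_eq_zero hz, if_pos (by omega)]
      have h6 : n - c + (c-1)/u - u = 0 := by omega
      rw [h6, Nat.choose_eq_zero_of_lt (by omega)]
      simp
    · rw [alt_vandermonde (c-1) u (n - c + (c-1)/u) hM]
      by_cases hcc : u + 1 ≤ c
      · rw [if_pos hcc, if_pos (by omega : u ≤ c - 1)]
      · rw [if_neg hcc, if_neg (by omega)]
  rw [Finset.sum_congr rfl h2]
  -- collapse the ite sum to Icc (u+1) n
  rw [← Finset.sum_filter]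
  have h3 : (Finset.Icc 1 n).filter (fun c => u + 1 ≤ c) = Finset.Icc (u+1) n := by
    ext x; simp only [Finset.mem_filter, Finset.mem_Icc]; omega
  rw [h3]
  -- reindex c = j + u
  have h4 : ∑ c ∈ Finset.Icc (u+1) n, ((n - c + (c-1)/u - u).choose (c - 1 - u) : ℤ)
      = ∑ j ∈ Finset.Icc 1 (n - u), ((n - (j + u) + ((j-1)/u + 1) - u).choose (j - 1) : ℤ) := by
    apply Finset.sum_nbij' (fun c => c - u) (fun j => j + u)
    · intro a ha; rw [Finset.mem_Icc] at ha ⊢; omega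
    · intro a ha; rw [Finset.mem_Icc] at ha ⊢; omega
    · intro a ha; rw [Finset.mem_Icc] at ha; omega
    · intro a ha; rw [Finset.mem_Icc] at ha; omega
    · intro a ha
      rw [Finset.mem_Icc] at ha
      have e1 : a - u + u = a := by omega
      have e2 : (a - u - 1) / u + 1 = (a - 1) / u := by
        have e3 : a - 1 = (a - u - 1) + u := by omega
        rw [e3, Nat.add_div_right _ (by omega : 0 < u)]
      rw [e1, e2]
      congr 2
      omega
  rw [h4]
  -- compare with d(n - (2u-1))
  rw [hd (n - (2*u - 1)) (by omega)]
  symm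
  have hcg : ∀ j ∈ Finset.Icc 1 (n - (2*u - 1)),
      ((n - (2*u - 1) - j + (j-1)/u).choose (j-1) : ℤ)
      = ((n - (j + u) + ((j-1)/u + 1) - u).choose (j - 1) : ℤ) := by
    intro j hj
    rw [Finset.mem_Icc] at hj
    congr 2
    have hkey : ∀ q : ℕ, n - (2*u - 1) - j + q = n - (j + u) + (q + 1) - u := fun q => by omega
    exact hkey _
  rw [Finset.sum_congr rfl hcg]
  apply Finset.sum_subset
  · apply Finset.Icc_subset_Icc_right; omega
  · intro j hj hj2
    rw [Finset.mem_Icc] at hj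
    simp only [Finset.mem_Icc, not_and, not_le] at hj2
    have hj3 : n - (2*u - 1) < j := hj2 hj.1
    have hq : (j-1)/u ≤ j - 1 := Nat.div_le_self _ _
    rw [Nat.cast_eq_zero]
    apply Nat.choose_eq_zero_of_lt
    set q := (j-1)/u with hqq
    omega

end SchreierAux

theorem card_Dset_recurrence (u n : ℕ) (hu : 2 ≤ u) (hn : 2 * u ≤ n) :
    ((Dset u n).card : ℤ) =
      (∑ i ∈ Finset.Icc 1 u,
        (-1 : ℤ) ^ (i - 1) * (u.choose i : ℤ) * ((Dset u (n - i)).card : ℤ)) +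
      ((Dset u (n - (2 * u - 1))).card : ℤ) := by
  have key := SchreierAux.key_identity u n hu hn
  have hsplit : Finset.range (u+1) = insert 0 (Finset.Icc 1 u) := by
    ext x; simp only [Finset.mem_range, Finset.mem_insert, Finset.mem_Icc]; omega
  rw [hsplit, Finset.sum_insert (by simp)] at key
  simp only [pow_zero, Nat.choose_zero_right, Nat.cast_one, one_mul, Nat.sub_zero] at key
  have hterm : ∀ i ∈ Finset.Icc 1 u,
      (-1:ℤ)^(i-1) * (u.choose i : ℤ) * ((Dset u (n-i)).card : ℤ)
      = -((-1:ℤ)^i * (u.choose i : ℤ) * ((Dset u (n-i)).card : ℤ)) := by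
    intro i hi
    rw [Finset.mem_Icc] at hi
    have hpow : (-1:ℤ)^i = -(-1:ℤ)^(i-1) := by
      conv_lhs => rw [show i = (i-1)+1 by omega]
      rw [pow_succ]; ring
    rw [hpow]; ring
  rw [Finset.sum_congr rfl hterm, Finset.sum_neg_distrib]
  linarith [key]
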